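/- Let h be C² on an open set in ℝ² with ω₂ = ∂h/∂I₂ ≠ 0, and set ν := ω₁/ω₂ where ωᵢ = ∂h/∂Iᵢ. Then the Arnold determinant D vanishes at a point if and only if ν satisfies the Burgers equation ∂ν/∂I₁ = ν · ∂ν/∂I₂ at that point. -/

import Mathlib

open Set Real

/-- When `ω₂ ≠ 0`, the vanishing of the Arnold determinant at a point is
equivalent to the Burgers equation `∂ν/∂I₁ = ν ∂ν/∂I₂` for `ν = ω₁/ω₂`. -/
theorem arnold_det_zero_iff_burgers
    (A : Set (ℝ × ℝ)) (hA : IsOpen A)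
    (h : ℝ × ℝ → ℝ) (hh : ContDiffOn ℝ 2 h A)
    (ω₁ ω₂ : ℝ × ℝ → ℝ)
    (hω₁ : ∀ x, ω₁ x = fderiv ℝ h x (1, 0))
    (hω₂ : ∀ x, ω₂ x = fderiv ℝ h x (0, 1))
    (hω₂ne : ∀ x ∈ A, ω₂ x ≠ 0)
    (ν : ℝ × ℝ → ℝ) (hν : ∀ x, ν x = ω₁ x / ω₂ x)
    (I : ℝ × ℝ) (hI : I ∈ A)
    (H : ℝ × ℝ → ℝ × ℝ → ℝ)
    (hH : ∀ v w, H v w = fderiv ℝ (fun x => fderiv ℝ h x v) I w) :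
    (-(H (1, 0) (1, 0)) * (ω₂ I) ^ 2
        + 2 * H (1, 0) (0, 1) * ω₁ I * ω₂ I
        - H (0, 1) (0, 1) * (ω₁ I) ^ 2 = 0) ↔
      fderiv ℝ ν I (1, 0) = ν I * fderiv ℝ ν I (0, 1) := by
  have hc : ContDiffAt ℝ 2 h I := hh.contDiffAt (hA.mem_nhds hI)
  have hg : ContDiffAt ℝ 1 (fderiv ℝ h) I := hc.fderiv_right (by norm_num)
  have hgd : DifferentiableAt ℝ (fderiv ℝ h) I := hg.differentiableAt one_ne_zero
  set K := fderiv ℝ (fderiv ℝ h) I with hK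
  have key : ∀ v : ℝ × ℝ, HasFDerivAt (fun x => fderiv ℝ h x v)
      ((ContinuousLinearMap.apply ℝ ℝ v).comp K) I :=
    fun v => (ContinuousLinearMap.apply ℝ ℝ v).hasFDerivAt.comp I hgd.hasFDerivAt
  have hHK : ∀ v w, H v w = K w v := by
    intro v w
    rw [hH, (key v).fderiv]
    rfl
  have hsymm : IsSymmSndFDerivAt ℝ h I := hc.isSymmSndFDerivAt (by simp)
  have hsym : H (0, 1) (1, 0) = H (1, 0) (0, 1) := by
    rw [hHK, hHK]; exact hsymm (1, 0) (0, 1)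
  have hω₁f : ω₁ = fun x => fderiv ℝ h x (1, 0) := funext hω₁
  have hω₂f : ω₂ = fun x => fderiv ℝ h x (0, 1) := funext hω₂
  have h1 : HasFDerivAt ω₁ ((ContinuousLinearMap.apply ℝ ℝ (1, 0)).comp K) I := by
    rw [hω₁f]; exact key _
  have h2 : HasFDerivAt ω₂ ((ContinuousLinearMap.apply ℝ ℝ (0, 1)).comp K) I := by
    rw [hω₂f]; exact key _
  have hb : ω₂ I ≠ 0 := hω₂ne I hI
  have hνf : ν = fun x => ω₁ x / ω₂ x := funext hν
  have hinv : HasFDerivAt (fun x => (ω₂ x)⁻¹)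
      ((-(ContinuousLinearMap.mulLeftRight ℝ ℝ (ω₂ I)⁻¹ (ω₂ I)⁻¹)).comp
        ((ContinuousLinearMap.apply ℝ ℝ (0, 1)).comp K)) I :=
    (hasFDerivAt_inv' hb).comp I h2
  have hν' : HasFDerivAt ν
      (ω₁ I • ((-(ContinuousLinearMap.mulLeftRight ℝ ℝ (ω₂ I)⁻¹ (ω₂ I)⁻¹)).comp
          ((ContinuousLinearMap.apply ℝ ℝ (0, 1)).comp K))
        + (ω₂ I)⁻¹ • ((ContinuousLinearMap.apply ℝ ℝ (1, 0)).comp K)) I := by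
    rw [hνf]; simp only [div_eq_mul_inv]; exact h1.mul hinv
  have hfν : ∀ w, fderiv ℝ ν I w
      = (ω₂ I * K w (1, 0) - ω₁ I * K w (0, 1)) / (ω₂ I) ^ 2 := by
    intro w
    rw [hν'.fderiv]
    simp [ContinuousLinearMap.mulLeftRight_apply]
    field_simp
    ring
  have e1 : fderiv ℝ ν I (1, 0)
      = (ω₂ I * H (1, 0) (1, 0) - ω₁ I * H (0, 1) (1, 0)) / (ω₂ I) ^ 2 := by
    rw [hfν, hHK, hHK]
  have e2 : fderiv ℝ ν I (0, 1)
      = (ω₂ I * H (1, 0) (0, 1) - ω₁ I * H (0, 1) (0, 1)) / (ω₂ I) ^ 2 := by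
    rw [hfν, hHK, hHK]
  rw [e1, e2, hν I, hsym, div_mul_div_comm]
  have hb3 : (0:ℝ) < ω₂ I ^ 2 := by positivity
  have hb4 : (0:ℝ) < ω₂ I * ω₂ I ^ 2 ∨ ω₂ I * ω₂ I ^ 2 < 0 := by
    rcases lt_or_gt_of_ne hb with h' | h'
    · right; nlinarith
    · left; positivity
  have hb5 : ω₂ I * ω₂ I ^ 2 ≠ 0 := by rcases hb4 with h' | h' <;> [exact ne_of_gt h'; exact ne_of_lt h']
  constructor
  · intro hx
    rw [div_eq_div_iff (ne_of_gt hb3) hb5]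
    linear_combination (-(ω₂ I) ^ 2) * hx
  · intro hx
    rw [div_eq_div_iff (ne_of_gt hb3) hb5] at hx
    have h5 : (ω₂ I) ^ 2 * (-H (1, 0) (1, 0) * ω₂ I ^ 2
        + 2 * H (1, 0) (0, 1) * ω₁ I * ω₂ I - H (0, 1) (0, 1) * ω₁ I ^ 2) = 0 := by
      linear_combination -hx
    exact (mul_eq_zero.mp h5).resolve_left (ne_of_gt hb3)
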